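/- If a convex body K in ℝ^d satisfies δ_T(K) = 1 (packings by translates can achieve density arbitrarily close to 1, i.e. supremum equal to 1), then ℝ^d can be tiled by translates of K. -/

import Mathlib

open MeasureTheory Filter Pointwise
open scoped ENNReal Topology

/-- The translational packing density of a body `K ⊆ ℝ^d`: the supremum, over all
countable packings by translates of `K` (pairwise disjoint interiors), of the upper
density `limsup_{r→∞} (Σᵢ Vol((vᵢ +ᵥ K) ∩ B(0,r))) / Vol(B(0,r))`. -/
noncomputable def transPackingDensity {d : ℕ} (K : Set (EuclideanSpace ℝ (Fin d))) : ℝ≥0∞ :=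
  ⨆ (v : ℕ → EuclideanSpace ℝ (Fin d))
    (_ : ∀ i j, i ≠ j → Disjoint (interior (v i +ᵥ K)) (interior (v j +ᵥ K))),
    limsup (fun r : ℝ =>
      (∑' i, volume ((v i +ᵥ K) ∩ Metric.closedBall 0 r)) /
        volume (Metric.closedBall (0 : EuclideanSpace ℝ (Fin d)) r)) atTop

section GroemerAux

open Metric Set

/-- Two translates of a set have disjoint interiors iff the difference of translation
vectors avoids the open difference body `interior K - interior K`. -/
theorem disjoint_vadd_iff {d : ℕ} (K : Set (EuclideanSpace ℝ (Fin d)))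
    (a b : EuclideanSpace ℝ (Fin d)) :
    Disjoint (interior (a +ᵥ K)) (interior (b +ᵥ K)) ↔
      a - b ∉ interior K - interior K := by
  rw [interior_vadd, interior_vadd]
  constructor
  · intro h hab
    rcases Set.mem_sub.1 hab with ⟨x, hx, y, hy, hxy⟩
    -- hxy : x - y = a - b, so a + y = b + x is a common point
    have hmem1 : a + y ∈ a +ᵥ interior K := ⟨y, hy, rfl⟩
    have hmem2 : a + y ∈ b +ᵥ interior K := by
      refine ⟨x, hx, ?_⟩
      show b + x = a + y
      have : x + b = a + y := by
        have h' := sub_eq_sub_iff_add_eq_add.mp hxy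
        exact h'
      rw [← this, add_comm]
    exact Set.disjoint_left.mp h hmem1 hmem2
  · intro h
    rw [Set.disjoint_left]
    rintro p ⟨y, hy, rfl⟩ ⟨x, hx, hp⟩
    -- hp : b +ᵥ x = a +ᵥ y
    apply h
    refine Set.mem_sub.2 ⟨x, hx, y, hy, ?_⟩
    -- need : x - y = a - b, knowing b + x = a + y
    rw [sub_eq_sub_iff_add_eq_add]
    have : b + x = a + y := hp
    rw [← this, add_comm]

/-- Fubini-type bound: if around every point there is an `ε`-ball inside the `R`-ball
that misses `W`, then the uncovered volume in large balls is proportionally large. -/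
theorem uncovered_bound {d : ℕ} (W : Set (EuclideanSpace ℝ (Fin d))) (hW : MeasurableSet W)
    {ε R : ℝ} (r : ℝ)
    (h : ∀ x, ∃ y, Metric.closedBall y ε ⊆ Metric.closedBall x R ∩ Wᶜ) :
    volume (Metric.closedBall (0 : EuclideanSpace ℝ (Fin d)) r) *
      volume (Metric.closedBall (0 : EuclideanSpace ℝ (Fin d)) ε) ≤
    volume (Metric.closedBall (0 : EuclideanSpace ℝ (Fin d)) R) *
      volume (Wᶜ ∩ Metric.closedBall (0 : EuclideanSpace ℝ (Fin d)) (r + R)) := by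
  classical
  set A : Set (EuclideanSpace ℝ (Fin d) × EuclideanSpace ℝ (Fin d)) :=
    {p | p.1 ∈ closedBall (0 : EuclideanSpace ℝ (Fin d)) r ∧ p.2 ∈ Wᶜ ∧ dist p.2 p.1 ≤ R} with hA
  have hAmeas : MeasurableSet A := by
    apply MeasurableSet.inter
    · exact measurable_fst (measurableSet_closedBall)
    apply MeasurableSet.inter
    · exact measurable_snd hW.compl
    · exact isClosed_le (continuous_snd.dist continuous_fst) continuous_const
        |>.measurableSet
  have h1 : volume (closedBall (0 : EuclideanSpace ℝ (Fin d)) r) * volume (closedBall (0 : EuclideanSpace ℝ (Fin d)) ε)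
      ≤ (volume.prod volume) A := by
    rw [Measure.prod_apply hAmeas]
    have hpt : (closedBall (0 : EuclideanSpace ℝ (Fin d)) r).indicator
          (fun _ => volume (closedBall (0 : EuclideanSpace ℝ (Fin d)) ε))
        ≤ fun x => volume (Prod.mk x ⁻¹' A) := by
      intro x
      by_cases hx : x ∈ closedBall (0 : EuclideanSpace ℝ (Fin d)) r
      · rw [Set.indicator_of_mem hx]
        obtain ⟨y, hy⟩ := h x
        have hsub : closedBall y ε ⊆ Prod.mk x ⁻¹' A := by
          intro z hz
          have hz' := hy hz
          exact ⟨hx, hz'.2, mem_closedBall.1 hz'.1⟩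
        calc volume (closedBall (0 : EuclideanSpace ℝ (Fin d)) ε) = volume (closedBall y ε) :=
              (Measure.addHaar_closedBall_center volume y ε).symm
          _ ≤ volume (Prod.mk x ⁻¹' A) := measure_mono hsub
      · rw [Set.indicator_of_notMem hx]; exact zero_le
    calc volume (closedBall (0 : EuclideanSpace ℝ (Fin d)) r) * volume (closedBall (0 : EuclideanSpace ℝ (Fin d)) ε)
        = ∫⁻ x, (closedBall (0 : EuclideanSpace ℝ (Fin d)) r).indicator
            (fun _ => volume (closedBall (0 : EuclideanSpace ℝ (Fin d)) ε)) x := by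
          rw [lintegral_indicator_const measurableSet_closedBall, mul_comm]
      _ ≤ ∫⁻ x, volume (Prod.mk x ⁻¹' A) := lintegral_mono hpt
  have h2 : (volume.prod volume) A
      ≤ volume (closedBall (0 : EuclideanSpace ℝ (Fin d)) R) * volume (Wᶜ ∩ closedBall (0 : EuclideanSpace ℝ (Fin d)) (r + R)) := by
    rw [Measure.prod_apply_symm hAmeas]
    have hpt : (fun y => volume ((fun x => (x, y)) ⁻¹' A))
        ≤ (Wᶜ ∩ closedBall (0 : EuclideanSpace ℝ (Fin d)) (r + R)).indicator
            (fun _ => volume (closedBall (0 : EuclideanSpace ℝ (Fin d)) R)) := by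
      intro y
      show volume ((fun x => (x, y)) ⁻¹' A)
        ≤ (Wᶜ ∩ closedBall (0 : EuclideanSpace ℝ (Fin d)) (r + R)).indicator
            (fun _ => volume (closedBall (0 : EuclideanSpace ℝ (Fin d)) R)) y
      by_cases hyW : y ∈ Wᶜ
      · by_cases hyB : y ∈ closedBall (0 : EuclideanSpace ℝ (Fin d)) (r + R)
        · rw [Set.indicator_of_mem (Set.mem_inter hyW hyB)]
          have hsub : ((fun x => (x, y)) ⁻¹' A) ⊆ closedBall y R := by
            intro x hx
            exact mem_closedBall'.2 hx.2.2
          calc volume ((fun x => (x, y)) ⁻¹' A) ≤ volume (closedBall y R) :=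
                measure_mono hsub
            _ = volume (closedBall (0 : EuclideanSpace ℝ (Fin d)) R) := Measure.addHaar_closedBall_center _ _ _
        · have hempty : ((fun x => (x, y)) ⁻¹' A) = ∅ := by
            ext x
            simp only [Set.mem_preimage, Set.mem_empty_iff_false, iff_false]
            rintro ⟨hx1, -, hx3⟩
            apply hyB
            rw [mem_closedBall] at hx1 ⊢
            calc dist y 0 ≤ dist y x + dist x 0 := dist_triangle _ _ _
              _ ≤ R + r := add_le_add hx3 hx1
              _ = r + R := add_comm _ _
          rw [hempty]
          simp only [measure_empty]
          exact zero_le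
      · have hempty : ((fun x => (x, y)) ⁻¹' A) = ∅ := by
          ext x
          simp only [Set.mem_preimage, Set.mem_empty_iff_false, iff_false]
          rintro ⟨-, hx2, -⟩
          exact hyW hx2
        rw [hempty]
        simp only [measure_empty]
        exact zero_le
    calc ∫⁻ y, volume ((fun x => (x, y)) ⁻¹' A)
        ≤ ∫⁻ y, (Wᶜ ∩ closedBall (0 : EuclideanSpace ℝ (Fin d)) (r + R)).indicator
            (fun _ => volume (closedBall (0 : EuclideanSpace ℝ (Fin d)) R)) y := lintegral_mono hpt
      _ = volume (closedBall (0 : EuclideanSpace ℝ (Fin d)) R) * volume (Wᶜ ∩ closedBall (0 : EuclideanSpace ℝ (Fin d)) (r + R)) := by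
          rw [lintegral_indicator_const (hW.compl.inter measurableSet_closedBall)]
  exact le_trans h1 h2

/-- For a packing by translates of a closed convex body, covered plus uncovered volume
in a ball is at most the volume of the ball. -/
theorem covered_add_uncovered_le {d : ℕ} (K : Set (EuclideanSpace ℝ (Fin d)))
    (hKcl : IsClosed K) (hKconv : Convex ℝ K)
    (v : ℕ → EuclideanSpace ℝ (Fin d))
    (hpack : ∀ i j, i ≠ j → Disjoint (interior (v i +ᵥ K)) (interior (v j +ᵥ K)))
    (s : ℝ) :
    (∑' i, volume ((v i +ᵥ K) ∩ Metric.closedBall 0 s)) +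
      volume ((⋃ i, v i +ᵥ K)ᶜ ∩ Metric.closedBall 0 s) ≤
      volume (Metric.closedBall (0 : EuclideanSpace ℝ (Fin d)) s) := by
  classical
  set B := Metric.closedBall (0 : EuclideanSpace ℝ (Fin d)) s with hB
  have hstep : ∀ i, volume ((v i +ᵥ K) ∩ B) ≤ volume ((v i +ᵥ interior K) ∩ B) := by
    intro i
    have hsub : (v i +ᵥ K) ∩ B ⊆ ((v i +ᵥ interior K) ∩ B) ∪ (v i +ᵥ frontier K) := by
      rintro z ⟨hz1, hz2⟩
      rcases hz1 with ⟨k, hk, rfl⟩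
      have : k ∈ interior K ∪ frontier K := by
        rw [← closure_eq_interior_union_frontier]
        exact subset_closure hk
      rcases this with hk' | hk'
      · exact Or.inl ⟨⟨k, hk', rfl⟩, hz2⟩
      · exact Or.inr ⟨k, hk', rfl⟩
    calc volume ((v i +ᵥ K) ∩ B)
        ≤ volume (((v i +ᵥ interior K) ∩ B) ∪ (v i +ᵥ frontier K)) := measure_mono hsub
      _ ≤ volume ((v i +ᵥ interior K) ∩ B) + volume (v i +ᵥ frontier K) :=
          measure_union_le _ _
      _ = volume ((v i +ᵥ interior K) ∩ B) := by
          rw [measure_vadd, hKconv.addHaar_frontier volume, add_zero]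
  have hdisj : Pairwise (Function.onFun Disjoint fun i => (v i +ᵥ interior K) ∩ B) := by
    intro i j hij
    have := hpack i j hij
    rw [interior_vadd, interior_vadd] at this
    exact this.mono inter_subset_left inter_subset_left
  have hmeas : ∀ i, MeasurableSet ((v i +ᵥ interior K) ∩ B) := fun i =>
    ((isOpen_interior.vadd (v i)).measurableSet).inter measurableSet_closedBall
  have hsum : (∑' i, volume ((v i +ᵥ K) ∩ B))
      ≤ volume (⋃ i, (v i +ᵥ interior K) ∩ B) := by
    rw [measure_iUnion hdisj hmeas]
    exact ENNReal.tsum_le_tsum hstep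
  have hdisj2 : Disjoint (⋃ i, (v i +ᵥ interior K) ∩ B) ((⋃ i, v i +ᵥ K)ᶜ ∩ B) := by
    refine Disjoint.mono ?_ inter_subset_left disjoint_compl_right
    apply Set.iUnion_subset
    intro i
    refine Set.Subset.trans inter_subset_left ?_
    refine Set.Subset.trans ?_ (Set.subset_iUnion (fun i => v i +ᵥ K) i)
    exact Set.vadd_set_mono interior_subset
  have hfinal : volume (⋃ i, (v i +ᵥ interior K) ∩ B) + volume ((⋃ i, v i +ᵥ K)ᶜ ∩ B)
      ≤ volume B := by
    rw [← measure_union hdisj2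
      ((MeasurableSet.compl (MeasurableSet.iUnion fun i =>
        ((hKcl.vadd (v i)).measurableSet))).inter measurableSet_closedBall)]
    apply measure_mono
    apply Set.union_subset
    · exact Set.iUnion_subset fun i => inter_subset_right
    · exact inter_subset_right
  calc (∑' i, volume ((v i +ᵥ K) ∩ B)) + volume ((⋃ i, v i +ᵥ K)ᶜ ∩ B)
      ≤ volume (⋃ i, (v i +ᵥ interior K) ∩ B) + volume ((⋃ i, v i +ᵥ K)ᶜ ∩ B) :=
        add_le_add_left hsum _
    _ ≤ volume B := hfinal

/-- If for every packing and every point there is a fixed-size uncovered ball nearby,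
then the packing density is strictly below `1`. -/
theorem density_lt_one {d : ℕ} (K : Set (EuclideanSpace ℝ (Fin d)))
    (hKcompact : IsCompact K) (hKconv : Convex ℝ K)
    {ε R : ℝ} (hε : 0 < ε) (hR : 0 < R)
    (hA : ∀ v : ℕ → EuclideanSpace ℝ (Fin d),
        (∀ i j, i ≠ j → Disjoint (interior (v i +ᵥ K)) (interior (v j +ᵥ K))) →
        ∀ x, ∃ y, Metric.closedBall y ε ⊆ Metric.closedBall x R ∩ (⋃ i, v i +ᵥ K)ᶜ) :
    transPackingDensity K < 1 := by
  classical
  set β := volume (Metric.closedBall (0 : EuclideanSpace ℝ (Fin d)) ε) with hβdef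
  set VR := volume (Metric.closedBall (0 : EuclideanSpace ℝ (Fin d)) R) with hVRdef
  set q : ℝ≥0∞ := min (β / VR * ((2 : ℝ≥0∞) ^ d)⁻¹) 1 with hqdef
  have hβ0 : β ≠ 0 := (measure_closedBall_pos volume 0 hε).ne'
  have hVRtop : VR ≠ ⊤ := measure_closedBall_lt_top.ne
  have hq0 : q ≠ 0 := by
    apply ne_of_gt
    apply lt_min _ zero_lt_one
    apply ENNReal.mul_pos
    · intro hc
      rw [ENNReal.div_eq_zero_iff] at hc
      rcases hc with hc | hc
      · exact hβ0 hc
      · exact hVRtop hc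
    · exact ENNReal.inv_ne_zero.mpr (ENNReal.pow_ne_top ENNReal.ofNat_ne_top)
  have key : ∀ v : ℕ → EuclideanSpace ℝ (Fin d),
      (∀ i j, i ≠ j → Disjoint (interior (v i +ᵥ K)) (interior (v j +ᵥ K))) →
      limsup (fun r : ℝ =>
        (∑' i, volume ((v i +ᵥ K) ∩ Metric.closedBall 0 r)) /
          volume (Metric.closedBall (0 : EuclideanSpace ℝ (Fin d)) r)) atTop ≤ 1 - q := by
    intro v hv
    apply Filter.limsup_le_of_le (by isBoundedDefault)
    rw [Filter.eventually_atTop]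
    refine ⟨2 * R, fun t ht => ?_⟩
    set W := ⋃ i, v i +ᵥ K with hWdef
    have hWmeas : MeasurableSet W :=
      MeasurableSet.iUnion fun i => ((hKcompact.isClosed.vadd (v i)).measurableSet)
    have htpos : (0:ℝ) < t := lt_of_lt_of_le (by linarith) ht
    have hVt0 : volume (Metric.closedBall (0 : EuclideanSpace ℝ (Fin d)) t) ≠ 0 :=
      (measure_closedBall_pos volume 0 htpos).ne'
    have hVttop : volume (Metric.closedBall (0 : EuclideanSpace ℝ (Fin d)) t) ≠ ⊤ :=
      measure_closedBall_lt_top.ne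
    have hub := uncovered_bound W hWmeas (t - R) (hA v hv)
    rw [sub_add_cancel] at hub
    -- volume of big ball at most 2^d times volume of half ball
    have hhalf : volume (Metric.closedBall (0 : EuclideanSpace ℝ (Fin d)) t)
        ≤ volume (Metric.closedBall (0 : EuclideanSpace ℝ (Fin d)) (t/2)) * (2:ℝ≥0∞)^d := by
      rw [Measure.addHaar_closedBall volume 0 htpos.le,
        Measure.addHaar_closedBall volume 0 (by linarith : (0:ℝ) ≤ t/2),
        finrank_euclideanSpace_fin]
      rw [mul_comm (ENNReal.ofReal ((t/2) ^ d) * _) _, ← mul_assoc]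
      apply mul_le_mul_left
      rw [show ((2:ℝ≥0∞)^d) = ENNReal.ofReal ((2:ℝ)^d) by
        rw [ENNReal.ofReal_pow (by norm_num : (0:ℝ) ≤ 2)]; norm_num]
      rw [← ENNReal.ofReal_mul (by positivity)]
      apply ENNReal.ofReal_le_ofReal
      rw [← mul_pow]
      apply le_of_eq
      congr 1
      ring
    have hq_le : q * volume (Metric.closedBall (0 : EuclideanSpace ℝ (Fin d)) t)
        ≤ volume (Wᶜ ∩ Metric.closedBall (0 : EuclideanSpace ℝ (Fin d)) t) := by
      calc q * volume (Metric.closedBall (0 : EuclideanSpace ℝ (Fin d)) t)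
          ≤ (β / VR * ((2:ℝ≥0∞)^d)⁻¹) * volume (Metric.closedBall (0 : EuclideanSpace ℝ (Fin d)) t) :=
            mul_le_mul_left (min_le_left _ _) _
        _ = (β / VR) * (volume (Metric.closedBall (0 : EuclideanSpace ℝ (Fin d)) t) * ((2:ℝ≥0∞)^d)⁻¹) := by
            rw [mul_assoc]
            congr 1
            rw [mul_comm]
        _ ≤ (β / VR) * volume (Metric.closedBall (0 : EuclideanSpace ℝ (Fin d)) (t/2)) := by
            apply mul_le_mul_right
            rw [← div_eq_mul_inv]
            exact ENNReal.div_le_of_le_mul hhalf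
        _ ≤ (β / VR) * volume (Metric.closedBall (0 : EuclideanSpace ℝ (Fin d)) (t - R)) := by
            apply mul_le_mul_right
            exact measure_mono (Metric.closedBall_subset_closedBall (by linarith))
        _ ≤ volume (Wᶜ ∩ Metric.closedBall (0 : EuclideanSpace ℝ (Fin d)) t) := by
            have heq : β / VR * volume (Metric.closedBall (0 : EuclideanSpace ℝ (Fin d)) (t - R))
                = (volume (Metric.closedBall (0 : EuclideanSpace ℝ (Fin d)) (t - R)) * β) / VR := by
              rw [div_eq_mul_inv, div_eq_mul_inv]; ring
            rw [heq]
            apply ENNReal.div_le_of_le_mul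
            rw [mul_comm VR _] at hub
            exact hub
    have hcov := covered_add_uncovered_le K hKcompact.isClosed hKconv v hv t
    have hL_top : volume (Wᶜ ∩ Metric.closedBall (0 : EuclideanSpace ℝ (Fin d)) t) ≠ ⊤ :=
      (lt_of_le_of_lt (measure_mono Set.inter_subset_right) measure_closedBall_lt_top).ne
    have h1 : (∑' i, volume ((v i +ᵥ K) ∩ Metric.closedBall 0 t))
        ≤ (1 - q) * volume (Metric.closedBall (0 : EuclideanSpace ℝ (Fin d)) t) := by
      have h2 : (∑' i, volume ((v i +ᵥ K) ∩ Metric.closedBall 0 t))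
          ≤ volume (Metric.closedBall (0 : EuclideanSpace ℝ (Fin d)) t) -
            volume (Wᶜ ∩ Metric.closedBall (0 : EuclideanSpace ℝ (Fin d)) t) :=
        ENNReal.le_sub_of_add_le_right hL_top hcov
      have h3 : volume (Metric.closedBall (0 : EuclideanSpace ℝ (Fin d)) t) -
            volume (Wᶜ ∩ Metric.closedBall (0 : EuclideanSpace ℝ (Fin d)) t)
          ≤ volume (Metric.closedBall (0 : EuclideanSpace ℝ (Fin d)) t) -
            q * volume (Metric.closedBall (0 : EuclideanSpace ℝ (Fin d)) t) :=
        tsub_le_tsub_left hq_le _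
      have h4 : volume (Metric.closedBall (0 : EuclideanSpace ℝ (Fin d)) t) -
            q * volume (Metric.closedBall (0 : EuclideanSpace ℝ (Fin d)) t)
          = (1 - q) * volume (Metric.closedBall (0 : EuclideanSpace ℝ (Fin d)) t) := by
        rw [ENNReal.sub_mul (fun _ _ => hVttop), one_mul]
      exact h2.trans (h3.trans_eq h4)
    exact ENNReal.div_le_of_le_mul h1
  have hle : transPackingDensity K ≤ 1 - q := by
    rw [transPackingDensity]
    exact iSup_le fun v => iSup_le fun hv => key v hv
  calc transPackingDensity K ≤ 1 - q := hle
    _ < 1 := ENNReal.sub_lt_self ENNReal.one_ne_top one_ne_zero hq0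

end GroemerAux

open Metric Set in
/-- If a convex body `K ⊆ ℝ^d` has translational packing density `1`, then `ℝ^d` can be
tiled by translates of `K`: there is a packing by translates of `K` whose union is all
of `ℝ^d`. -/
theorem tiling_of_transPackingDensity_eq_one (d : ℕ)
    (K : Set (EuclideanSpace ℝ (Fin d)))
    (hKcompact : IsCompact K) (hKconv : Convex ℝ K)
    (hKint : (interior K).Nonempty)
    (hδ : transPackingDensity K = 1) :
    ∃ v : ℕ → EuclideanSpace ℝ (Fin d),
      (∀ i j, i ≠ j → Disjoint (interior (v i +ᵥ K)) (interior (v j +ᵥ K))) ∧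
      (⋃ i, v i +ᵥ K) = Set.univ := by
  classical
  -- dimension zero is impossible: no valid packings exist, so the density is 0, not 1
  rcases Nat.eq_zero_or_pos d with hd0 | hd
  · exfalso
    subst hd0
    haveI : Subsingleton (EuclideanSpace ℝ (Fin 0)) := by
      rw [← Module.finrank_zero_iff (R := ℝ)]
      exact finrank_euclideanSpace_fin
    have hzero : transPackingDensity K = 0 := by
      rw [transPackingDensity]
      refine le_antisymm (iSup_le fun v => iSup_le fun hv => ?_) zero_le
      exfalso
      have h01 := hv 0 1 (by norm_num)
      have hveq : v 0 = v 1 := Subsingleton.elim _ _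
      rw [hveq] at h01
      have hne : (interior (v 1 +ᵥ K)).Nonempty := by
        rw [interior_vadd]
        obtain ⟨a, ha⟩ := hKint
        exact ⟨v 1 +ᵥ a, ⟨a, ha, rfl⟩⟩
      obtain ⟨b, hb⟩ := hne
      exact Set.disjoint_left.mp h01 hb hb
    rw [hzero] at hδ
    exact zero_ne_one hδ
  by_contra hno
  push_neg at hno
  -- Claim A: there are ε, R > 0 such that every packing misses an ε-ball near every point
  have claimA : ∃ ε > (0:ℝ), ∃ R > (0:ℝ), ∀ v : ℕ → EuclideanSpace ℝ (Fin d),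
      (∀ i j, i ≠ j → Disjoint (interior (v i +ᵥ K)) (interior (v j +ᵥ K))) →
      ∀ x, ∃ y, closedBall y ε ⊆ closedBall x R ∩ (⋃ i, v i +ᵥ K)ᶜ := by
    by_contra hAneg
    push_neg at hAneg
    set O : Set (EuclideanSpace ℝ (Fin d)) := interior K - interior K with hOdef
    have hOopen : IsOpen O := IsOpen.sub_right isOpen_interior
    have hO0 : (0 : EuclideanSpace ℝ (Fin d)) ∈ O := by
      obtain ⟨a, ha⟩ := hKint
      exact ⟨a, ha, a, ha, sub_self a⟩
    -- a sequence of packings that are 1/(n+1)-dense on balls of radius n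
    have hfam : ∀ n : ℕ, ∃ w : ℕ → EuclideanSpace ℝ (Fin d),
        (∀ i j : ℕ, i ≠ j → w i - w j ∉ O) ∧
        ∀ p : EuclideanSpace ℝ (Fin d), ‖p‖ ≤ (n:ℝ) →
          ∃ i, p - w i ∈ K + closedBall 0 (1/((n:ℝ)+1)) := by
      intro n
      obtain ⟨v, hvpack, x, hx⟩ := hAneg (1/((n:ℝ)+1)) (by positivity) ((n:ℝ)+1) (by positivity)
      refine ⟨fun i => v i - x, fun i j hij => ?_, fun p hp => ?_⟩
      · have h1 := (disjoint_vadd_iff K (v i) (v j)).mp (hvpack i j hij)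
        rw [hOdef]
        rwa [sub_sub_sub_cancel_right]
      · have hns := hx (p + x)
        rcases Set.not_subset.mp hns with ⟨z, hz1, hz2⟩
        have hzx : z ∈ closedBall x ((n:ℝ)+1) := by
          rw [mem_closedBall] at hz1 ⊢
          have hd1 : dist (p + x) x = ‖p‖ := by
            rw [dist_eq_norm, add_sub_cancel_right]
          have h1n : (1:ℝ)/((n:ℝ)+1) ≤ 1 := by
            rw [div_le_one (by positivity)]
            linarith [Nat.cast_nonneg (α := ℝ) n]
          calc dist z x ≤ dist z (p + x) + dist (p + x) x := dist_triangle _ _ _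
            _ ≤ 1/((n:ℝ)+1) + ‖p‖ := by rw [hd1]; exact add_le_add_left hz1 _
            _ ≤ (n:ℝ) + 1 := by linarith
        have hzW : z ∈ ⋃ i, v i +ᵥ K := by
          by_contra hzW
          exact hz2 ⟨hzx, hzW⟩
        rw [Set.mem_iUnion] at hzW
        obtain ⟨i, k, hk, hzk⟩ := hzW
        refine ⟨i, ?_⟩
        refine ⟨k, hk, (p + x) - z, ?_, ?_⟩
        · rw [mem_closedBall_zero_iff, ← dist_eq_norm, dist_comm]
          exact mem_closedBall.mp hz1
        · have hzeq : v i + k = z := hzk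
          rw [← hzeq]
          abel_nf
          module
    choose w hwsep hwdense using hfam
    set U : Ultrafilter ℕ := Ultrafilter.of atTop with hUdef
    have hUtop : ∀ m : ℕ, {n : ℕ | m ≤ n} ∈ U := fun m =>
      Ultrafilter.of_le atTop (Filter.mem_atTop m)
    set S : Set (EuclideanSpace ℝ (Fin d)) :=
      {z | ∀ δ : ℝ, 0 < δ → {n : ℕ | ∃ i, dist (w n i) z ≤ δ} ∈ U} with hSdef
    -- separation of limit centers
    have hSsep : ∀ z ∈ S, ∀ z' ∈ S, z ≠ z' → z - z' ∉ O := by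
      intro z hz z' hz' hne hmem
      obtain ⟨δ₀, hδ₀pos, hδ₀⟩ := Metric.isOpen_iff.mp hOopen _ hmem
      have hdistpos : 0 < dist z z' := dist_pos.mpr hne
      set δ := min (δ₀/3) (dist z z'/3) with hδdef
      have hδpos : 0 < δ := lt_min (by linarith) (by linarith)
      have h1 := hz δ hδpos
      have h2 := hz' δ hδpos
      obtain ⟨n, hn⟩ := Filter.nonempty_of_mem (Filter.inter_mem h1 h2)
      obtain ⟨⟨i, hi⟩, ⟨j, hj⟩⟩ := hn
      have hδ3 : δ ≤ δ₀/3 := min_le_left _ _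
      have hδd : δ ≤ dist z z'/3 := min_le_right _ _
      have hij : i ≠ j := by
        rintro rfl
        have htri := dist_triangle z (w n i) z'
        have h4 : dist z (w n i) ≤ δ := by rw [dist_comm]; exact hi
        linarith
      apply hwsep n i j hij
      apply hδ₀
      rw [Metric.mem_ball]
      calc dist (w n i - w n j) (z - z')
          ≤ dist (w n i) z + dist (w n j) z' := dist_sub_sub_le _ _ _ _
        _ < δ₀ := by linarith
    -- covering by limit centers
    have hScov : ∀ x : EuclideanSpace ℝ (Fin d), ∃ z ∈ S, x - z ∈ K := by
      intro x
      obtain ⟨m₀, hm₀⟩ := exists_nat_ge ‖x‖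
      have hpn : ∀ n : ℕ, ∃ q : EuclideanSpace ℝ (Fin d),
          m₀ ≤ n → (∃ i, q = w n i) ∧ x - q ∈ K + closedBall 0 (1/((n:ℝ)+1)) := by
        intro n
        by_cases h : m₀ ≤ n
        · obtain ⟨i, hi⟩ := hwdense n x (le_trans hm₀ (by exact_mod_cast h))
          exact ⟨w n i, fun _ => ⟨⟨i, rfl⟩, hi⟩⟩
        · exact ⟨0, fun h' => absurd h' h⟩
      choose p hp using hpn
      have hsub1 : ∀ n m : ℕ, m ≤ n →
          K + closedBall (0 : EuclideanSpace ℝ (Fin d)) (1/((n:ℝ)+1)) ⊆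
          K + closedBall 0 (1/((m:ℝ)+1)) := by
        intro n m hmn
        apply Set.add_subset_add_left
        apply Metric.closedBall_subset_closedBall
        apply one_div_le_one_div_of_le (by positivity)
        have : (m:ℝ) ≤ (n:ℝ) := by exact_mod_cast hmn
        linarith
      have hMcomp : IsCompact (K + closedBall (0 : EuclideanSpace ℝ (Fin d)) 1) :=
        hKcompact.add (isCompact_closedBall 0 1)
      have hCcomp : IsCompact
          ((fun q : EuclideanSpace ℝ (Fin d) => x - q) '' (K + closedBall 0 1)) :=
        hMcomp.image (continuous_const.sub continuous_id)
      have hCmem : {n : ℕ | p n ∈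
          (fun q : EuclideanSpace ℝ (Fin d) => x - q) '' (K + closedBall 0 1)} ∈ U := by
        apply Filter.mem_of_superset (hUtop m₀)
        intro n hn
        obtain ⟨-, hx2⟩ := hp n hn
        have hx3 : x - p n ∈ K + closedBall 0 1 := by
          have h1n : (1:ℝ)/((n:ℝ)+1) ≤ 1/((0:ℝ)+1) := by
            apply one_div_le_one_div_of_le (by norm_num)
            linarith [Nat.cast_nonneg (α := ℝ) n]
          have := hsub1 n 0 (Nat.zero_le n) hx2
          simpa using this
        exact ⟨x - p n, hx3, sub_sub_cancel x (p n)⟩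
      obtain ⟨z, hzC, hz⟩ := hCcomp.ultrafilter_le_nhds (U.map p)
        (Filter.le_principal_iff.mpr (by rw [Ultrafilter.coe_map]; exact Filter.mem_map.mpr hCmem))
      have htend : Filter.Tendsto p (↑U) (𝓝 z) := by
        rw [Filter.Tendsto, ← Ultrafilter.coe_map]
        exact hz
      refine ⟨z, ?_, ?_⟩
      · intro δ hδpos
        have hball : {n : ℕ | p n ∈ Metric.ball z δ} ∈ U := htend (Metric.ball_mem_nhds z hδpos)
        apply Filter.mem_of_superset (Filter.inter_mem (hUtop m₀) hball)
        rintro n ⟨hn1, hn2⟩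
        obtain ⟨⟨i, hi⟩, -⟩ := hp n hn1
        exact ⟨i, by rw [← hi]; exact (Metric.mem_ball.mp hn2).le⟩
      · have hmem : ∀ m : ℕ, x - z ∈ K + closedBall (0 : EuclideanSpace ℝ (Fin d)) (1/((m:ℝ)+1)) := by
          intro m
          have hFclosed : IsClosed (K + closedBall (0 : EuclideanSpace ℝ (Fin d)) (1/((m:ℝ)+1))) :=
            (hKcompact.add (isCompact_closedBall _ _)).isClosed
          have hev : ∀ᶠ n in (↑U : Filter ℕ), x - p n ∈ K + closedBall 0 (1/((m:ℝ)+1)) := by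
            apply Filter.mem_of_superset (Filter.inter_mem (hUtop m₀) (hUtop m))
            rintro n ⟨hn1, hn2⟩
            obtain ⟨-, hx2⟩ := hp n hn1
            exact hsub1 n m hn2 hx2
          exact hFclosed.mem_of_tendsto (htend.const_sub x) hev
        obtain ⟨a, ha⟩ := hKint
        have hKne : K.Nonempty := ⟨a, interior_subset ha⟩
        have hinf : ∀ m : ℕ, Metric.infDist (x - z) K ≤ 1/((m:ℝ)+1) := by
          intro m
          rcases hmem m with ⟨k, hk, b, hb, hkb⟩
          have hdk : dist (x - z) k ≤ 1/((m:ℝ)+1) := by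
            rw [dist_eq_norm, show x - z - k = b from by rw [← hkb]; exact add_sub_cancel_left k b]
            exact mem_closedBall_zero_iff.mp hb
          exact le_trans (Metric.infDist_le_dist_of_mem hk) hdk
        have h0 : Metric.infDist (x - z) K ≤ 0 :=
          ge_of_tendsto' tendsto_one_div_add_atTop_nhds_zero_nat hinf
        exact (hKcompact.isClosed.mem_iff_infDist_zero hKne).mpr
          (le_antisymm h0 Metric.infDist_nonneg)
    -- the set of limit centers is countable
    obtain ⟨ρ, hρpos, hρ⟩ := Metric.isOpen_iff.mp hOopen 0 hO0
    have hScount : S.Countable := by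
      apply Set.PairwiseDisjoint.countable_of_isOpen
        (s := fun z : EuclideanSpace ℝ (Fin d) => Metric.ball z (ρ/2))
      · intro z hz z' hz' hne
        simp only [Function.onFun]
        rw [Set.disjoint_left]
        intro u hu hu'
        apply hSsep z hz z' hz' hne
        apply hρ
        have h1 := Metric.mem_ball.mp hu
        have h2 := Metric.mem_ball.mp hu'
        have hdzz : dist z z' < ρ := by
          have htri := dist_triangle z u z'
          have h1' : dist z u < ρ/2 := by rw [dist_comm]; exact h1
          linarith
        rw [Metric.mem_ball, dist_zero_right, ← dist_eq_norm]
        exact hdzz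
      · exact fun z _ => isOpen_ball
      · exact fun z _ => ⟨z, Metric.mem_ball_self (by linarith)⟩
    haveI : Nontrivial (EuclideanSpace ℝ (Fin d)) := by
      apply (Module.finrank_pos_iff (R := ℝ)).mp
      rw [finrank_euclideanSpace_fin]
      exact hd
    -- the set of limit centers is infinite
    have hSinf : S.Infinite := by
      intro hfin
      have hcover : (⋃ z ∈ S, z +ᵥ K) = Set.univ := by
        apply Set.eq_univ_of_forall
        intro x
        obtain ⟨z, hzS, hzK⟩ := hScov x
        refine Set.mem_biUnion hzS ⟨x - z, hzK, ?_⟩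
        show z + (x - z) = x
        rw [add_sub_cancel]
      have hcomp : IsCompact (⋃ z ∈ S, z +ᵥ K) := by
        apply hfin.isCompact_biUnion
        intro z _
        rw [← Set.image_vadd]
        exact hKcompact.image (continuous_const_vadd z)
      exact hcomp.ne_univ hcover
    haveI := hScount.to_subtype
    haveI := hSinf.to_subtype
    obtain ⟨dS⟩ := nonempty_denumerable ↥S
    let e : ℕ ≃ ↥S := (@Denumerable.eqv ↥S dS).symm
    refine hno (fun i => ((e i : ↥S) : EuclideanSpace ℝ (Fin d))) ?_ ?_
    · intro i j hij
      rw [disjoint_vadd_iff]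
      exact hSsep _ (e i).2 _ (e j).2 (fun hEq => hij (e.injective (Subtype.ext hEq)))
    · apply Set.eq_univ_of_forall
      intro x
      obtain ⟨z, hzS, hzK⟩ := hScov x
      rw [Set.mem_iUnion]
      refine ⟨e.symm ⟨z, hzS⟩, ?_⟩
      show x ∈ ((e (e.symm ⟨z, hzS⟩) : ↥S) : EuclideanSpace ℝ (Fin d)) +ᵥ K
      rw [Equiv.apply_symm_apply]
      exact ⟨x - z, hzK, by show z + (x - z) = x; rw [add_sub_cancel]⟩
  obtain ⟨ε, hε, R, hR, hA⟩ := claimA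
  have hlt := density_lt_one K hKcompact hKconv hε hR hA
  rw [hδ] at hlt
  exact lt_irrefl _ hlt
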